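/- arXiv:math/0607638 — 4 statements merged into one kernel-verified Lean document; each statement's English description precedes it below -/
import Mathlib

section
/- Let k be an algebraically closed field of characteristic zero. The minimal primes of the ideal J_m ⊆ R are exactly the ideals P(m;t_1,…,t_r) where t_1,…,t_r are nonnegative integers with 0 ≤ t_i ≤ m+1 and t_1+⋯+t_r = m+1. -/
open MvPolynomial Polynomial


/-- The polynomial ring `R = k[x_i^(j) : 1 ≤ i ≤ n, 0 ≤ j ≤ m]` in `n(m+1)` variables;
the variable `x_i^(j)` is `MvPolynomial.X (i, j)`. -/
abbrev JetRing (k : Type*) [Field k] (m n : ℕ) : Type _ :=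
  MvPolynomial (Fin n × Fin (m + 1)) k

/-- `jetGen k m n r hrn j` is the generator `g_j`, i.e. the coefficient of `t^j` in the
product `∏_{i=1}^{r} (x_i^(0) + x_i^(1) t + ⋯ + x_i^(m) t^m)`. -/
noncomputable def jetGen (k : Type*) [Field k] (m n r : ℕ) (hrn : r ≤ n) (j : ℕ) :
    JetRing k m n :=
  Polynomial.coeff
    (∏ i : Fin r, ∑ l : Fin (m + 1),
      Polynomial.C (MvPolynomial.X (Fin.castLE hrn i, l)) * Polynomial.X ^ (l : ℕ)) j

/-- The ideal `J_m = (g_0, …, g_m)` defining the `m`-th jet scheme of `x_1 ⋯ x_r = 0`. -/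
noncomputable def jetIdeal (k : Type*) [Field k] (m n r : ℕ) (hrn : r ≤ n) :
    Ideal (JetRing k m n) :=
  Ideal.span (jetGen k m n r hrn '' Set.Iic m)

/-- The ideal `P(m; t_1, …, t_r) = (x_i^(j) : 1 ≤ i ≤ r, 0 ≤ j ≤ t_i - 1)`. -/
noncomputable def compPrime (k : Type*) [Field k] (m n r : ℕ) (hrn : r ≤ n)
    (t : Fin r → ℕ) : Ideal (JetRing k m n) :=
  Ideal.span {p | ∃ (i : Fin r) (j : Fin (m + 1)), (j : ℕ) < t i ∧
    p = MvPolynomial.X (Fin.castLE hrn i, j)}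

/-- The length of a module, valued in `ℕ∞`: the supremum of lengths of strictly
increasing chains of submodules. -/
noncomputable def moduleLength (R M : Type*) [Ring R] [AddCommGroup M] [Module R M] : ℕ∞ :=
  Order.height (⊤ : Submodule R M)


section primespan
variable {k : Type*} [Field k] {σ : Type*}

lemma span_X_isPrime (s : Set σ) :
    (Ideal.span (MvPolynomial.X '' s : Set (MvPolynomial σ k))).IsPrime := by
  classical
  let φ : MvPolynomial σ k →ₐ[k] MvPolynomial {i : σ // i ∉ s} k :=
    aeval (fun i => if h : i ∈ s then 0 else X (⟨i, h⟩ : {i : σ // i ∉ s}))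
  let ψ : MvPolynomial {i : σ // i ∉ s} k →ₐ[k] MvPolynomial σ k := rename Subtype.val
  have key : ∀ p : MvPolynomial σ k, p - ψ (φ p) ∈ Ideal.span (MvPolynomial.X '' s) := by
    intro p
    induction p using MvPolynomial.induction_on with
    | C a => simp [φ, ψ, MvPolynomial.aeval_C, rename_C]
    | add p q hp hq =>
      have : p + q - ψ (φ (p + q)) = (p - ψ (φ p)) + (q - ψ (φ q)) := by
        simp [map_add]; ring
      rw [this]; exact Ideal.add_mem _ hp hq
    | mul_X p i hp =>
      by_cases hi : i ∈ s
      · have : φ (X i) = 0 := by simp [φ, hi]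
        have h2 : p * X i - ψ (φ (p * X i)) = p * X i := by
          simp [map_mul, this]
        rw [h2]
        exact Ideal.mul_mem_left _ _ (Ideal.subset_span ⟨i, hi, rfl⟩)
      · have : ψ (φ (X i)) = X i := by simp [φ, ψ, hi]
        have h2 : p * X i - ψ (φ (p * X i)) = (p - ψ (φ p)) * X i := by
          simp only [map_mul, this]; ring
        rw [h2]
        exact Ideal.mul_mem_right _ _ hp
  have hker : Ideal.span (MvPolynomial.X '' s : Set (MvPolynomial σ k))
      = RingHom.ker (φ : MvPolynomial σ k →+* MvPolynomial {i : σ // i ∉ s} k) := by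
    apply le_antisymm
    · rw [Ideal.span_le]
      rintro _ ⟨i, hi, rfl⟩
      simp [RingHom.mem_ker, φ, hi]
    · intro p hp
      rw [RingHom.mem_ker] at hp
      have := key p
      rwa [show φ p = (φ : MvPolynomial σ k →+* _) p from rfl, hp, map_zero, sub_zero] at this
  rw [hker]
  exact RingHom.ker_isPrime _

lemma X_mem_span_X_iff {s : Set σ} {v : σ} :
    (X v : MvPolynomial σ k) ∈ Ideal.span (MvPolynomial.X '' s) ↔ v ∈ s := by
  rw [mem_ideal_span_X_image]
  simp only [MvPolynomial.support_X, Finset.mem_singleton, forall_eq, Finsupp.single_apply]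
  constructor
  · rintro ⟨i, hi, hne⟩
    rcases eq_or_ne v i with rfl | hvi
    · exact hi
    · simp [Finsupp.single_apply, hvi] at hne
  · intro hv
    exact ⟨v, hv, by simp⟩

end primespan

lemma coeff_sum_C_mul_X_pow {A : Type*} [CommRing A] {m : ℕ} (c : Fin (m + 1) → A) (d : ℕ) :
    (∑ l : Fin (m + 1), Polynomial.C (c l) * Polynomial.X ^ (l : ℕ)).coeff d =
      if h : d < m + 1 then c ⟨d, h⟩ else 0 := by
  rw [Polynomial.finset_sum_coeff]
  simp only [Polynomial.coeff_C_mul, Polynomial.coeff_X_pow, mul_ite, mul_one, mul_zero]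
  split_ifs with h
  · rw [Finset.sum_eq_single (⟨d, h⟩ : Fin (m + 1))] <;> simp +contextual [Fin.ext_iff, eq_comm]
  · apply Finset.sum_eq_zero
    intro l _
    rw [if_neg]
    omega

lemma exists_le_sum : ∀ (r : ℕ) (o : Fin r → ℕ) (s : ℕ), s ≤ ∑ i, o i →
    ∃ t : Fin r → ℕ, (∀ i, t i ≤ o i) ∧ ∑ i, t i = s := by
  intro r
  induction r with
  | zero =>
    intro o s hs
    simp only [Finset.univ_eq_empty, Finset.sum_empty, Nat.le_zero] at hs
    exact ⟨fun _ => 0, fun i => i.elim0, by simp [hs]⟩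
  | succ r ih =>
    intro o s hs
    rw [Fin.sum_univ_succ] at hs
    obtain ⟨t', ht'le, ht'sum⟩ := ih (fun i => o i.succ) (s - min s (o 0))
      (by simpa using (by omega : s - min s (o 0) ≤ ∑ j : Fin r, o j.succ))
    refine ⟨Fin.cons (min s (o 0)) t', ?_, ?_⟩
    · intro i
      refine Fin.cases ?_ ?_ i
      · simp
      · intro j; simpa using ht'le j
    · rw [Fin.sum_univ_succ]
      simp only [Fin.cons_zero, Fin.cons_succ]
      rw [ht'sum]; omega

lemma rootMultiplicity_prod {k : Type*} [Field k] {ι : Type*} (s : Finset ι) (G : ι → k[X])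
    (h : ∀ i ∈ s, G i ≠ 0) :
    rootMultiplicity 0 (∏ i ∈ s, G i) = ∑ i ∈ s, rootMultiplicity 0 (G i) := by
  classical
  induction s using Finset.induction with
  | empty => simp
  | @insert a s ha ih =>
    rw [Finset.prod_insert ha, Finset.sum_insert ha,
      Polynomial.rootMultiplicity_mul (mul_ne_zero (h a (Finset.mem_insert_self a s))
        (Finset.prod_ne_zero_iff.mpr fun i hi => h i (Finset.mem_insert_of_mem hi))),
      ih fun i hi => h i (Finset.mem_insert_of_mem hi)]
section part3
variable (k : Type*) [Field k] (m n r : ℕ) (hrn : r ≤ n)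

/-- The index set of variables generating `compPrime t`. -/
def compSet (t : Fin r → ℕ) : Set (Fin n × Fin (m + 1)) :=
  {v | ∃ (i : Fin r) (j : Fin (m + 1)), (j : ℕ) < t i ∧ v = (Fin.castLE hrn i, j)}

lemma compPrime_eq_span (t : Fin r → ℕ) :
    compPrime k m n r hrn t = Ideal.span (MvPolynomial.X '' compSet m n r hrn t) := by
  unfold compPrime compSet
  congr 1
  ext p
  constructor
  · rintro ⟨i, j, hj, rfl⟩
    exact ⟨(Fin.castLE hrn i, j), ⟨i, j, hj, rfl⟩, rfl⟩
  · rintro ⟨v, ⟨i, j, hj, rfl⟩, rfl⟩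
    exact ⟨i, j, hj, rfl⟩

lemma compPrime_isPrime (t : Fin r → ℕ) : (compPrime k m n r hrn t).IsPrime := by
  rw [compPrime_eq_span]; exact span_X_isPrime _

lemma X_mem_compPrime {t : Fin r → ℕ} {i : Fin r} {j : Fin (m + 1)} :
    MvPolynomial.X (Fin.castLE hrn i, j) ∈ compPrime k m n r hrn t ↔ (j : ℕ) < t i := by
  rw [compPrime_eq_span, X_mem_span_X_iff]
  constructor
  · rintro ⟨i', j', hj', h⟩
    obtain ⟨h1, h2⟩ := Prod.mk.injEq .. ▸ h
    rwa [Fin.castLE_inj.mp h1, h2]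
  · intro hj
    exact ⟨i, j, hj, rfl⟩

lemma compPrime_le_compPrime {s t : Fin r → ℕ} (hs : ∀ i, s i ≤ m + 1)
    (h : compPrime k m n r hrn s ≤ compPrime k m n r hrn t) : ∀ i, s i ≤ t i := by
  intro i
  by_contra hlt
  push_neg at hlt
  have hti : t i < m + 1 := lt_of_lt_of_le hlt (hs i)
  have hmem : MvPolynomial.X (Fin.castLE hrn i, (⟨t i, hti⟩ : Fin (m + 1)))
      ∈ compPrime k m n r hrn s := (X_mem_compPrime k m n r hrn).mpr hlt
  have := (X_mem_compPrime k m n r hrn).mp (h hmem)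
  simp at this

lemma jetIdeal_le_compPrime {t : Fin r → ℕ} (ht : ∀ i, t i ≤ m + 1)
    (hsum : m + 1 ≤ ∑ i, t i) :
    jetIdeal k m n r hrn ≤ compPrime k m n r hrn t := by
  rw [jetIdeal, Ideal.span_le]
  rintro _ ⟨j, hj, rfl⟩
  simp only [Set.mem_Iic] at hj
  set P := compPrime k m n r hrn t
  set q := Ideal.Quotient.mk P
  rw [SetLike.mem_coe, ← Ideal.Quotient.eq_zero_iff_mem]
  have key : ∀ i : Fin r, (Polynomial.X : (JetRing k m n ⧸ P)[X]) ^ (t i) ∣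
      Polynomial.map q (∑ l : Fin (m + 1),
        Polynomial.C (MvPolynomial.X (Fin.castLE hrn i, l)) * Polynomial.X ^ (l : ℕ)) := by
    intro i
    rw [Polynomial.X_pow_dvd_iff]
    intro d hd
    rw [Polynomial.coeff_map, coeff_sum_C_mul_X_pow]
    have hdm : d < m + 1 := lt_of_lt_of_le hd (ht i)
    rw [dif_pos hdm]
    rw [Ideal.Quotient.eq_zero_iff_mem]
    exact Ideal.subset_span ⟨i, ⟨d, hdm⟩, hd, rfl⟩
  have hdvd : (Polynomial.X : (JetRing k m n ⧸ P)[X]) ^ (m + 1) ∣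
      Polynomial.map q (∏ i : Fin r, ∑ l : Fin (m + 1),
        Polynomial.C (MvPolynomial.X (Fin.castLE hrn i, l)) * Polynomial.X ^ (l : ℕ)) := by
    rw [Polynomial.map_prod]
    calc (Polynomial.X : (JetRing k m n ⧸ P)[X]) ^ (m + 1)
        ∣ ∏ i : Fin r, (Polynomial.X : (JetRing k m n ⧸ P)[X]) ^ (t i) := by
          rw [Finset.prod_pow_eq_pow_sum]
          exact pow_dvd_pow _ hsum
      _ ∣ _ := Finset.prod_dvd_prod_of_dvd _ _ (fun i _ => key i)
  rw [jetGen, ← Polynomial.coeff_map]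
  exact Polynomial.X_pow_dvd_iff.mp hdvd j (by omega)
end part3
section part4
variable (k : Type*) [Field k] (m n r : ℕ) (hrn : r ≤ n)


/-- The finset of exponent tuples indexing the minimal primes. -/
noncomputable def tupleFinset : Finset (Fin r → ℕ) :=
  (Fintype.piFinset fun _ : Fin r => Finset.range (m + 2)).filter fun t => ∑ i, t i = m + 1

lemma mem_tupleFinset {t : Fin r → ℕ} :
    t ∈ tupleFinset m r ↔ (∀ i, t i ≤ m + 1) ∧ ∑ i, t i = m + 1 := by
  simp only [tupleFinset, Finset.mem_filter, Fintype.mem_piFinset, Finset.mem_range]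
  constructor
  · rintro ⟨h1, h2⟩; exact ⟨fun i => by have := h1 i; omega, h2⟩
  · rintro ⟨h1, h2⟩; exact ⟨fun i => by have := h1 i; omega, h2⟩

lemma exists_tuple_of_mem_zeroLocus {x : (Fin n × Fin (m + 1)) → k}
    (hx : x ∈ MvPolynomial.zeroLocus k (jetIdeal k m n r hrn)) :
    ∃ t ∈ tupleFinset m r, ∀ p ∈ compPrime k m n r hrn t, MvPolynomial.eval x p = 0 := by
  classical
  set G : Fin r → k[X] := fun i =>
    ∑ l : Fin (m + 1), Polynomial.C (x (Fin.castLE hrn i, l)) * Polynomial.X ^ (l : ℕ) with hG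
  have hGmap : (∏ i : Fin r, G i) = Polynomial.map (MvPolynomial.eval x)
      (∏ i : Fin r, ∑ l : Fin (m + 1),
        Polynomial.C (MvPolynomial.X (Fin.castLE hrn i, l)) * Polynomial.X ^ (l : ℕ)) := by
    rw [Polynomial.map_prod]
    refine Finset.prod_congr rfl fun i _ => ?_
    rw [Polynomial.map_sum]
    refine Finset.sum_congr rfl fun l _ => ?_
    simp [hG]
  have hcoeff : ∀ j ≤ m, (∏ i : Fin r, G i).coeff j = 0 := by
    intro j hj
    rw [hGmap, Polynomial.coeff_map]
    exact hx _ (Ideal.subset_span ⟨j, hj, rfl⟩)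
  have hdvd : (Polynomial.X : k[X]) ^ (m + 1) ∣ ∏ i : Fin r, G i := by
    rw [Polynomial.X_pow_dvd_iff]
    intro d hd
    exact hcoeff d (by omega)
  -- helper to conclude vanishing on compPrime from vanishing on the variables
  have kill : ∀ t : Fin r → ℕ,
      (∀ (i : Fin r) (j : Fin (m + 1)), (j : ℕ) < t i → x (Fin.castLE hrn i, j) = 0) →
      ∀ p ∈ compPrime k m n r hrn t, MvPolynomial.eval x p = 0 := by
    intro t hvar p hp
    have : compPrime k m n r hrn t ≤ RingHom.ker (MvPolynomial.eval x) := by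
      rw [compPrime, Ideal.span_le]
      rintro _ ⟨i, j, hj, rfl⟩
      simp only [SetLike.mem_coe, RingHom.mem_ker, MvPolynomial.eval_X]
      exact hvar i j hj
    exact this hp
  by_cases hzero : ∃ i₀, G i₀ = 0
  · obtain ⟨i₀, hi₀⟩ := hzero
    have hvan : ∀ l : Fin (m + 1), x (Fin.castLE hrn i₀, l) = 0 := by
      intro l
      have h0 : (G i₀).coeff (l : ℕ) = 0 := by rw [hi₀]; simp
      rw [hG] at h0
      rw [coeff_sum_C_mul_X_pow, dif_pos l.isLt] at h0
      simpa using h0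
    refine ⟨fun i => if i = i₀ then m + 1 else 0, ?_, ?_⟩
    · rw [mem_tupleFinset]
      refine ⟨fun i => by split <;> omega, ?_⟩
      simp [Finset.sum_ite_eq']
    · apply kill
      intro i j hj
      by_cases hii : i = i₀
      · subst hii; exact hvan j
      · simp [hii] at hj
  · push_neg at hzero
    have hprodne : (∏ i : Fin r, G i) ≠ 0 :=
      Finset.prod_ne_zero_iff.mpr fun i _ => hzero i
    set o : Fin r → ℕ := fun i => rootMultiplicity 0 (G i) with ho
    have hsum : m + 1 ≤ ∑ i, o i := by
      rw [ho, ← rootMultiplicity_prod _ _ fun i _ => hzero i]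
      rw [Polynomial.le_rootMultiplicity_iff hprodne]
      simpa using hdvd
    obtain ⟨t, htle, htsum⟩ := exists_le_sum r o (m + 1) hsum
    refine ⟨t, ?_, ?_⟩
    · rw [mem_tupleFinset]
      refine ⟨fun i => ?_, htsum⟩
      calc t i ≤ ∑ j, t j := Finset.single_le_sum (fun j _ => Nat.zero_le _) (Finset.mem_univ i)
        _ = m + 1 := htsum
    · apply kill
      intro i j hj
      have hdvdi : (Polynomial.X : k[X]) ^ (o i) ∣ G i := by
        have := Polynomial.pow_rootMultiplicity_dvd (G i) 0
        simpa using this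
      have hc : (G i).coeff (j : ℕ) = 0 :=
        Polynomial.X_pow_dvd_iff.mp hdvdi _ (lt_of_lt_of_le hj (htle i))
      rw [hG] at hc
      rw [coeff_sum_C_mul_X_pow, dif_pos j.isLt] at hc
      simpa using hc

variable [IsAlgClosed k]

lemma radical_jetIdeal :
    (jetIdeal k m n r hrn).radical = (tupleFinset m r).inf (compPrime k m n r hrn) := by
  apply le_antisymm
  · refine Finset.le_inf fun t ht => ?_
    rw [mem_tupleFinset] at ht
    exact le_trans (Ideal.radical_mono (jetIdeal_le_compPrime k m n r hrn ht.1 ht.2.ge))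
      (le_of_eq (compPrime_isPrime k m n r hrn t).radical)
  · rw [← MvPolynomial.vanishingIdeal_zeroLocus_eq_radical (K := k)]
    intro p hp
    intro x hx
    obtain ⟨t, htT, hkill⟩ := exists_tuple_of_mem_zeroLocus k m n r hrn hx
    exact hkill p ((Finset.inf_le (f := compPrime k m n r hrn) htT : _ ≤ _) hp)

end part4

/-- **Goward–Smith.** Over an algebraically closed field of characteristic zero, the
minimal primes of `J_m` are exactly the ideals `P(m; t_1, …, t_r)` with
`0 ≤ t_i ≤ m + 1` and `t_1 + ⋯ + t_r = m + 1`. -/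
theorem minimalPrimes_jetIdeal
    (k : Type*) [Field k] [IsAlgClosed k] [CharZero k]
    (m n r : ℕ) (hr : 1 ≤ r) (hrn : r ≤ n) :
    (jetIdeal k m n r hrn).minimalPrimes =
      {Q | ∃ t : Fin r → ℕ, (∀ i, t i ≤ m + 1) ∧ (∑ i, t i = m + 1) ∧
        Q = compPrime k m n r hrn t} := by
  have hradq : ∀ q : Ideal (JetRing k m n), q.IsPrime → jetIdeal k m n r hrn ≤ q →
      ∃ s ∈ tupleFinset m r, compPrime k m n r hrn s ≤ q := by
    intro q hq hJq
    have hrad : (tupleFinset m r).inf (compPrime k m n r hrn) ≤ q := by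
      rw [← radical_jetIdeal]
      calc (jetIdeal k m n r hrn).radical ≤ q.radical := Ideal.radical_mono hJq
        _ = q := hq.radical
    exact (Ideal.IsPrime.inf_le' hq).mp hrad
  ext Q
  simp only [Set.mem_setOf_eq]
  constructor
  · rintro ⟨⟨hQp, hJQ⟩, hmin⟩
    obtain ⟨s, hsT, hsle⟩ := hradq Q hQp hJQ
    rw [mem_tupleFinset] at hsT
    have hJs : jetIdeal k m n r hrn ≤ compPrime k m n r hrn s :=
      jetIdeal_le_compPrime k m n r hrn hsT.1 hsT.2.ge
    have hQs : Q ≤ compPrime k m n r hrn s :=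
      hmin ⟨compPrime_isPrime k m n r hrn s, hJs⟩ hsle
    exact ⟨s, hsT.1, hsT.2, le_antisymm hQs hsle⟩
  · rintro ⟨t, htle, htsum, rfl⟩
    refine ⟨⟨compPrime_isPrime k m n r hrn t,
      jetIdeal_le_compPrime k m n r hrn htle htsum.ge⟩, ?_⟩
    rintro q ⟨hqp, hJq⟩ hqle
    obtain ⟨s, hsT, hsle⟩ := hradq q hqp hJq
    rw [mem_tupleFinset] at hsT
    have hst : ∀ i, s i ≤ t i :=
      compPrime_le_compPrime k m n r hrn hsT.1 (hsle.trans hqle)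
    have hseq : s = t := by
      funext i
      by_contra hne
      have hlt : s i < t i := lt_of_le_of_ne (hst i) hne
      have : ∑ i, s i < ∑ i, t i :=
        Finset.sum_lt_sum (fun j _ => hst j) ⟨i, Finset.mem_univ i, hlt⟩
      omega
    rw [← hseq]
    exact hsle
end

section
/- Let R be a commutative ring and x_1,…,x_r nonunits in R. If the product x_1⋯x_r is a nonzerodivisor on R, then ℓ(R/(x_1⋯x_r)) = Σ_{i=1}^r ℓ(R/(x_i)), where ℓ denotes length as an R-module (valued in ℕ ∪ {∞}). -/
lemma height_add_one_le_aux {α : Type*} [Preorder α] {x y : α} (h : x < y) :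
    Order.height x + 1 ≤ Order.height y := by
  rw [Order.height_eq_iSup_lt_height y]
  exact le_iSup₂ (f := fun z (_ : z < y) => Order.height z + 1) x h

/-- Semicontinuity-type step lemma: a chain's length is bounded by the sum of heights of
two monotone images, provided every strict step is strict in one of the images. -/
lemma length_le_height_add_height_aux {α β γ : Type*} [Preorder α] [Preorder β] [Preorder γ]
    {f : α → β} {g : α → γ} (hf : Monotone f) (hg : Monotone g)
    (hstep : ∀ ⦃a b : α⦄, a < b → f a < f b ∨ g a < g b) (p : LTSeries α) :
    (p.length : ℕ∞) ≤ Order.height (f p.last) + Order.height (g p.last) := by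
  suffices H : ∀ (n : ℕ) (p : LTSeries α), p.length = n →
      (p.length : ℕ∞) ≤ Order.height (f p.last) + Order.height (g p.last) from H _ p rfl
  intro n
  induction n with
  | zero => intro p hp; simp [hp]
  | succ n ih =>
    intro p hn
    have hlen : p.length ≠ 0 := by omega
    have hlt := p.eraseLast_last_rel_last hlen
    have h1' := ih p.eraseLast (by simp [RelSeries.eraseLast, hn])
    have hel : p.eraseLast.length = n := by simp [RelSeries.eraseLast, hn]
    rw [hel] at h1'
    have h1 := h1'
    rw [hn]
    rcases hstep hlt with h | h
    · calc ((n + 1 : ℕ) : ℕ∞) = (n : ℕ∞) + 1 := by push_cast; ring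
        _ ≤ (Order.height (f p.eraseLast.last) + Order.height (g p.eraseLast.last)) + 1 :=
            add_le_add_left h1 1
        _ = (Order.height (f p.eraseLast.last) + 1) + Order.height (g p.eraseLast.last) := by ring
        _ ≤ Order.height (f p.last) + Order.height (g p.last) :=
            add_le_add (height_add_one_le_aux h) (Order.height_mono (hg hlt.le))
    · calc ((n + 1 : ℕ) : ℕ∞) = (n : ℕ∞) + 1 := by push_cast; ring
        _ ≤ (Order.height (f p.eraseLast.last) + Order.height (g p.eraseLast.last)) + 1 :=
            add_le_add_left h1 1
        _ = Order.height (f p.eraseLast.last) + (Order.height (g p.eraseLast.last) + 1) := by ring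
        _ ≤ Order.height (f p.last) + Order.height (g p.last) :=
            add_le_add (Order.height_mono (hf hlt.le)) (height_add_one_le_aux h)

/-- Additivity of module length in short exact sequences. -/
lemma moduleLength_eq_add_aux {R M : Type*} [Ring R] [AddCommGroup M] [Module R M]
    (N : Submodule R M) :
    moduleLength R M = moduleLength R N + moduleLength R (M ⧸ N) := by
  refine le_antisymm ?_ ?_
  · apply Order.height_le
    intro p hp
    have hf : Monotone fun P : Submodule R M => P.comap N.subtype :=
      fun _ _ h => Submodule.comap_mono h
    have hg : Monotone fun P : Submodule R M => P.map N.mkQ :=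
      fun _ _ h => Submodule.map_mono h
    have hstep : ∀ ⦃a b : Submodule R M⦄, a < b →
        a.comap N.subtype < b.comap N.subtype ∨ a.map N.mkQ < b.map N.mkQ := by
      intro a b hab
      by_cases hcomap : a.comap N.subtype < b.comap N.subtype
      · exact Or.inl hcomap
      · right
        have heq : a.comap N.subtype = b.comap N.subtype :=
          ((hf hab.le).lt_or_eq).resolve_left hcomap
        have hinf : b ⊓ N ≤ a ⊓ N := by
          have := congrArg (Submodule.map N.subtype) heq
          rw [Submodule.map_comap_subtype, Submodule.map_comap_subtype] at this
          rw [inf_comm b N, inf_comm a N, this]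
        have hsup : a ⊔ N < b ⊔ N := sup_lt_sup_of_lt_of_inf_le_inf hab hinf
        refine lt_of_le_of_ne (hg hab.le) fun hcon => ?_
        have := congrArg (Submodule.comap N.mkQ) hcon
        rw [Submodule.comap_map_mkQ, Submodule.comap_map_mkQ] at this
        rw [sup_comm a N, sup_comm b N] at hsup
        exact hsup.ne this
    have := length_le_height_add_height_aux hf hg hstep p
    rw [hp] at this
    simpa [moduleLength, Submodule.comap_top, Submodule.map_top, Submodule.range_mkQ] using this
  · rw [moduleLength, moduleLength, moduleLength, Order.height_eq_iSup_last_eq,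
      Order.height_eq_iSup_last_eq (⊤ : Submodule R (M ⧸ N))]
    have hne1 : ∃ p : LTSeries (Submodule R N), p.last = ⊤ := ⟨RelSeries.singleton _ ⊤, rfl⟩
    have hne2 : ∃ p : LTSeries (Submodule R (M ⧸ N)), p.last = ⊤ := ⟨RelSeries.singleton _ ⊤, rfl⟩
    rw [ENat.biSup_add' hne1]
    refine iSup₂_le fun p hp => ?_
    rw [ENat.add_biSup' hne2]
    refine iSup₂_le fun q hq => ?_
    -- map p into Submodule R M via map N.subtype, and q via comap N.mkQ, then glue.
    have hmapinj : Function.Injective (Submodule.map N.subtype) :=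
      Submodule.map_injective_of_injective N.injective_subtype
    have hmapmono : Monotone (Submodule.map N.subtype) := fun _ _ h => Submodule.map_mono h
    have hmapsm : StrictMono (Submodule.map N.subtype) := hmapmono.strictMono_of_injective hmapinj
    have hcomapinj : Function.Injective (Submodule.comap N.mkQ) := by
      intro P Q h
      have := congrArg (Submodule.map N.mkQ) h
      rwa [Submodule.map_comap_eq_of_surjective N.mkQ_surjective,
        Submodule.map_comap_eq_of_surjective N.mkQ_surjective] at this
    have hcomapmono : Monotone (Submodule.comap N.mkQ) := fun _ _ h => Submodule.comap_mono h
    have hcomapsm : StrictMono (Submodule.comap N.mkQ) :=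
      hcomapmono.strictMono_of_injective hcomapinj
    let p' : LTSeries (Submodule R M) := p.map _ hmapsm
    let q' : LTSeries (Submodule R M) := q.map _ hcomapsm
    have hp'last : p'.last = N := by
      show Submodule.map N.subtype p.last = N
      rw [hp, Submodule.map_top, Submodule.range_subtype]
    have hq'last : q'.last = ⊤ := by
      show Submodule.comap N.mkQ q.last = ⊤
      rw [hq, Submodule.comap_top]
    have hq'head : N ≤ q'.head := by
      show N ≤ Submodule.comap N.mkQ q.head
      intro z hz
      show N.mkQ z ∈ q.head
      rw [show N.mkQ z = 0 from (Submodule.Quotient.mk_eq_zero N).2 hz]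
      exact zero_mem _
    rcases eq_or_lt_of_le (hp'last ▸ hq'head) with heq | hlt
    · have hlast : (p'.smash q' heq).last = ⊤ := by rw [RelSeries.last_smash, hq'last]
      have hlen' : ((p'.smash q' heq).length : ℕ∞) = (p.length : ℕ∞) + q.length := by
        norm_cast
      have hle := Order.length_le_height_last (p := p'.smash q' heq)
      rw [hlast, hlen'] at hle
      exact hle
    · have hsnoc : (p'.snoc q'.head hlt).last = q'.head := by simp
      have hlast : ((p'.snoc q'.head hlt).smash q' hsnoc).last = ⊤ := by
        rw [RelSeries.last_smash, hq'last]
      have hlen' : (((p'.snoc q'.head hlt).smash q' hsnoc).length : ℕ∞) =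
          (p.length : ℕ∞) + 1 + q.length := by
        norm_cast
      have hle := Order.length_le_height_last (p := (p'.snoc q'.head hlt).smash q' hsnoc)
      rw [hlast, hlen'] at hle
      refine le_trans ?_ hle
      have : (p.length : ℕ∞) + 1 + q.length = ((p.length : ℕ∞) + q.length) + 1 := by ring
      rw [this]
      exact le_self_add

/-- Module length is invariant under linear equivalence. -/
lemma moduleLength_congr_aux {R M M₂ : Type*} [Ring R] [AddCommGroup M] [Module R M]
    [AddCommGroup M₂] [Module R M₂] (e : M ≃ₗ[R] M₂) :
    moduleLength R M = moduleLength R M₂ := by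
  unfold moduleLength
  have h : (Submodule.orderIsoMapComap e) ⊤ = ⊤ := by
    simp [Submodule.orderIsoMapComap, Submodule.map_top, LinearEquiv.range]
  rw [← h, Order.height_orderIso]

lemma moduleLength_zero_aux {R M : Type*} [Ring R] [AddCommGroup M] [Module R M]
    [Subsingleton M] : moduleLength R M = 0 := by
  unfold moduleLength
  rw [Order.height_eq_zero]
  intro P _
  exact le_of_eq (Subsingleton.elim _ _)

/-- The key two-factor case. -/
lemma moduleLength_quotient_mul_aux {R : Type*} [CommRing R] (a b : R)
    (hb : b ∈ nonZeroDivisors R) :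
    moduleLength R (R ⧸ Ideal.span {a * b}) =
      moduleLength R (R ⧸ Ideal.span {a}) + moduleLength R (R ⧸ Ideal.span {b}) := by
  set I : Ideal R := Ideal.span {a * b} with hI
  have hIle : I ≤ Ideal.span {b} := by
    rw [hI, Ideal.span_le]
    intro z hz
    rw [Set.mem_singleton_iff] at hz
    subst hz
    exact Ideal.mem_span_singleton.2 ⟨a, mul_comm a b⟩
  set N : Submodule R (R ⧸ I) := Submodule.map I.mkQ (Ideal.span {b}) with hN
  have e1 : ((R ⧸ I) ⧸ N) ≃ₗ[R] R ⧸ (Ideal.span {b} : Ideal R) :=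
    Submodule.quotientQuotientEquivQuotient I (Ideal.span {b}) hIle
  let f : R →ₗ[R] R ⧸ I := I.mkQ ∘ₗ LinearMap.toSpanSingleton R R b
  have hker : LinearMap.ker f = Ideal.span {a} := by
    ext r
    simp only [f, LinearMap.mem_ker, LinearMap.comp_apply, LinearMap.toSpanSingleton_apply,
      Submodule.mkQ_apply, Submodule.Quotient.mk_eq_zero, smul_eq_mul]
    rw [hI]
    constructor
    · intro h
      obtain ⟨c, hc⟩ := Ideal.mem_span_singleton.1 h
      have hz : (r - a * c) * b = 0 := by linear_combination hc
      have h0 : r - a * c = 0 := mem_nonZeroDivisors_iff_right.1 hb _ hz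
      exact Ideal.mem_span_singleton.2 ⟨c, by linear_combination h0⟩
    · intro h
      obtain ⟨c, hc⟩ := Ideal.mem_span_singleton.1 h
      exact Ideal.mem_span_singleton.2 ⟨c, by rw [hc]; ring⟩
  have hrange : LinearMap.range f = N := by
    rw [hN]
    rw [LinearMap.range_comp, ← LinearMap.span_singleton_eq_range]
  have e2 : (R ⧸ Ideal.span {a} : Type _) ≃ₗ[R] N :=
    (Submodule.quotEquivOfEq _ _ hker.symm).trans
      ((LinearMap.quotKerEquivRange f).trans (LinearEquiv.ofEq _ _ hrange))
  rw [moduleLength_eq_add_aux N, ← moduleLength_congr_aux e2, moduleLength_congr_aux e1]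

/-- If `x_1, …, x_r` are nonunits of a commutative ring `R` whose product is a
nonzerodivisor on `R`, then `ℓ(R/(x_1⋯x_r)) = Σ_{i=1}^r ℓ(R/(x_i))`. -/
theorem length_quotient_prod_eq_sum
    (R : Type*) [CommRing R] (r : ℕ) (x : Fin r → R)
    (hnu : ∀ i, ¬ IsUnit (x i)) (hnzd : (∏ i, x i) ∈ nonZeroDivisors R) :
    moduleLength R (R ⧸ Ideal.span {∏ i, x i}) =
      ∑ i, moduleLength R (R ⧸ Ideal.span {x i}) := by
  induction r with
  | zero =>
    rw [show (∏ i : Fin 0, x i) = 1 from Finset.prod_empty]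
    rw [Ideal.span_singleton_one]
    rw [show (∑ i : Fin 0, moduleLength R (R ⧸ Ideal.span {x i})) = 0 by simp]
    have : Subsingleton (R ⧸ (⊤ : Ideal R)) := Submodule.Quotient.subsingleton_iff.2 rfl
    exact moduleLength_zero_aux
  | succ n ih =>
    rw [Fin.prod_univ_succ] at hnzd ⊢
    rw [Fin.sum_univ_succ]
    obtain ⟨-, hbmem⟩ := mul_mem_nonZeroDivisors.1 hnzd
    rw [moduleLength_quotient_mul_aux (x 0) _ hbmem,
      ih (fun i => x i.succ) (fun i => hnu i.succ) hbmem]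
end

section
/- Let R be a commutative ring and x, y nonunits in R such that the product xy is a nonzerodivisor on R. Then ℓ(R/(xy)) = ℓ(R/(x)) + ℓ(R/(y)), where ℓ denotes length as an R-module (valued in ℕ ∪ {∞}). -/
lemma aux_enat_add_le {a b c : ℕ∞}
    (h : ∀ n m : ℕ, ↑n ≤ a → ↑m ≤ b → (↑(n + m) : ℕ∞) ≤ c) : a + b ≤ c := by
  have hc : ∀ k : ℕ, c = (k : ℕ∞) → a + b ≤ c := by
    intro k hk
    induction a using ENat.recTopCoe with
    | top =>
      have := h (k + 1) 0 le_top (by simp)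
      rw [hk] at this
      exact absurd (by exact_mod_cast this) (by omega)
    | coe n =>
      induction b using ENat.recTopCoe with
      | top =>
        have := h 0 (k + 1) (by simp) le_top
        rw [hk] at this
        exact absurd (by exact_mod_cast this) (by omega)
      | coe m =>
        have := h n m le_rfl le_rfl
        exact_mod_cast this
  induction c using ENat.recTopCoe with
  | top => exact le_top
  | coe k => exact hc k rfl


section
variable {R M : Type*} [Ring R] [AddCommGroup M] [Module R M]


lemma aux_split (N : Submodule R M) (A B : Submodule R M) (hAB : A ≤ B)
    (h1 : Submodule.comap N.subtype A = Submodule.comap N.subtype B)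
    (h2 : Submodule.map N.mkQ A = Submodule.map N.mkQ B) : A = B := by
  refine le_antisymm hAB fun b hb => ?_
  have : N.mkQ b ∈ Submodule.map N.mkQ A := h2 ▸ ⟨b, hb, rfl⟩
  obtain ⟨a, ha, hab⟩ := this
  have hba : b - a ∈ N := by
    rw [← Submodule.ker_mkQ N, LinearMap.mem_ker, map_sub, hab, sub_self]
  have : (⟨b - a, hba⟩ : N) ∈ Submodule.comap N.subtype B := by
    simpa using Submodule.sub_mem B hb (hAB ha)
  rw [← h1] at this
  simpa using Submodule.add_mem A ha this

lemma aux_chain_split (N : Submodule R M) (p : LTSeries (Submodule R M)) :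
    ∃ (p₁ : LTSeries (Submodule R N)) (p₂ : LTSeries (Submodule R (M ⧸ N))),
      p.length ≤ p₁.length + p₂.length := by
  suffices h : ∀ (n : ℕ) (p : LTSeries (Submodule R M)), p.length = n →
      ∃ (p₁ : LTSeries (Submodule R N)) (p₂ : LTSeries (Submodule R (M ⧸ N))),
        p.length ≤ p₁.length + p₂.length ∧
        p₁.last = Submodule.comap N.subtype p.last ∧
        p₂.last = Submodule.map N.mkQ p.last by
    obtain ⟨p₁, p₂, h, -, -⟩ := h p.length p rfl
    exact ⟨p₁, p₂, h⟩
  intro n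
  induction n with
  | zero =>
    intro p hp
    exact ⟨RelSeries.singleton _ _, RelSeries.singleton _ _, by omega, rfl, rfl⟩
  | succ n ih =>
    intro p hp
    obtain ⟨p₁, p₂, hlen, hl1, hl2⟩ := ih p.eraseLast (by simp [hp])
    have hne : p.length ≠ 0 := by omega
    have hlt : p.eraseLast.last < p.last := p.eraseLast_last_rel_last hne
    have hc : Submodule.comap N.subtype p.eraseLast.last ≤ Submodule.comap N.subtype p.last :=
      Submodule.comap_mono hlt.le
    have hm : Submodule.map N.mkQ p.eraseLast.last ≤ Submodule.map N.mkQ p.last :=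
      Submodule.map_mono hlt.le
    rcases hc.lt_or_eq with hc | hc
    · rcases hm.lt_or_eq with hm | hm
      · refine ⟨p₁.snoc _ (hl1 ▸ hc), p₂.snoc _ (hl2 ▸ hm), ?_, by simp, by simp⟩
        simp only [RelSeries.snoc_length]
        have := p.eraseLast_length
        omega
      · refine ⟨p₁.snoc _ (hl1 ▸ hc), p₂, ?_, by simp, by rw [hl2, hm]⟩
        simp only [RelSeries.snoc_length]
        have := p.eraseLast_length
        omega
    · rcases hm.lt_or_eq with hm | hm
      · refine ⟨p₁, p₂.snoc _ (hl2 ▸ hm), ?_, by rw [hl1, hc], by simp⟩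
        simp only [RelSeries.snoc_length]
        have := p.eraseLast_length
        omega
      · exact absurd (aux_split N _ _ hlt.le hc hm) hlt.ne


lemma aux_chain_combine (N : Submodule R M) (p₁ : LTSeries (Submodule R N))
    (p₂ : LTSeries (Submodule R (M ⧸ N))) :
    ∃ p : LTSeries (Submodule R M), p.length = p₁.length + p₂.length := by
  set a := p₁.length
  set b := p₂.length
  refine ⟨⟨a + b, fun i => if h : (i : ℕ) ≤ a then
      Submodule.map N.subtype (p₁ ⟨i, by omega⟩)
    else Submodule.comap N.mkQ (p₂ ⟨(i : ℕ) - a, by omega⟩), ?_⟩, rfl⟩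
  intro i
  have hi : (i : ℕ) < a + b := i.isLt
  have hsub : ∀ X : Submodule R N, Submodule.map N.subtype X ≤ N := fun X => by
    rintro _ ⟨z, -, rfl⟩; exact z.2
  have hquo : ∀ Y, N ≤ Submodule.comap N.mkQ Y := fun Y z hz => by
    have : N.mkQ z = 0 := by simpa [Submodule.mkQ_apply] using (Submodule.Quotient.mk_eq_zero N).2 hz
    simp [Submodule.mem_comap, this]
  simp only [Fin.coe_castSucc, Fin.val_succ]
  split_ifs with h1 h2 h2
  · exact Submodule.map_strictMono_of_injective N.injective_subtype
      (p₁.strictMono (by simp [Fin.lt_def]))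
  · -- i ≤ a, i+1 > a, so i = a
    have hia : (i : ℕ) = a := by omega
    have h01 : p₂ ⟨0, by omega⟩ < p₂ ⟨(i : ℕ) + 1 - a, by omega⟩ :=
      p₂.strictMono (by simp [Fin.lt_def]; omega)
    calc Submodule.map N.subtype (p₁ ⟨i, by omega⟩) ≤ N := hsub _
      _ ≤ Submodule.comap N.mkQ (p₂ ⟨0, by omega⟩) := hquo _
      _ < _ := Submodule.comap_strictMono_of_surjective N.mkQ_surjective h01
  · omega
  · refine Submodule.comap_strictMono_of_surjective N.mkQ_surjective
      (p₂.strictMono ?_)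
    simp [Fin.lt_def]; omega

lemma moduleLength_eq_add (N : Submodule R M) :
    moduleLength R M = moduleLength R N + moduleLength R (M ⧸ N) := by
  apply le_antisymm
  · apply Order.height_le
    intro p hlast
    obtain ⟨p₁, p₂, hlen⟩ := aux_chain_split N p
    calc (p.length : ℕ∞) ≤ (p₁.length : ℕ∞) + (p₂.length : ℕ∞) := by exact_mod_cast hlen
      _ ≤ _ := add_le_add (Order.length_le_height le_top) (Order.length_le_height le_top)
  · apply aux_enat_add_le
    intro n m hn hm
    obtain ⟨p₁, -, hp₁⟩ := Order.exists_series_of_le_height _ hn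
    obtain ⟨p₂, -, hp₂⟩ := Order.exists_series_of_le_height _ hm
    obtain ⟨p, hp⟩ := aux_chain_combine N p₁ p₂
    have := Order.length_le_height (p := p) (le_top : p.last ≤ ⊤)
    rw [hp, hp₁, hp₂] at this
    exact_mod_cast this

lemma moduleLength_congr {M₂ : Type*} [AddCommGroup M₂] [Module R M₂] (e : M ≃ₗ[R] M₂) :
    moduleLength R M = moduleLength R M₂ := by
  have : (Submodule.orderIsoMapComap e) ⊤ = ⊤ := by
    simp [Submodule.orderIsoMapComap, Submodule.map_top, LinearEquiv.range]
  rw [moduleLength, moduleLength, ← this, Order.height_orderIso]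

end

/-- If `x, y` are nonunits of a commutative ring `R` such that `x * y` is a
nonzerodivisor on `R`, then `ℓ(R/(xy)) = ℓ(R/(x)) + ℓ(R/(y))`. -/
theorem length_quotient_mul_eq_add
    (R : Type*) [CommRing R] (x y : R)
    (hx : ¬ IsUnit x) (hy : ¬ IsUnit y) (hnzd : x * y ∈ nonZeroDivisors R) :
    moduleLength R (R ⧸ Ideal.span {x * y}) =
      moduleLength R (R ⧸ Ideal.span {x}) + moduleLength R (R ⧸ Ideal.span {y}) := by
  have hynzd : y ∈ nonZeroDivisors R := (mul_mem_nonZeroDivisors.mp hnzd).2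
  set I : Ideal R := Ideal.span {x * y} with hI
  have hle : I ≤ Ideal.span {y} := by
    rw [Ideal.span_le, Set.singleton_subset_iff]
    exact Ideal.mem_span_singleton.mpr ⟨x, mul_comm x y⟩
  set N : Submodule R (R ⧸ I) := Submodule.map I.mkQ (Ideal.span {y}) with hN
  set φ : R →ₗ[R] R ⧸ I := I.mkQ ∘ₗ LinearMap.toSpanSingleton R R y with hφ
  have hker : LinearMap.ker φ = Ideal.span {x} := by
    ext r
    simp only [hφ, LinearMap.mem_ker, LinearMap.comp_apply, LinearMap.toSpanSingleton_apply,
      Submodule.mkQ_apply, Submodule.Quotient.mk_eq_zero]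
    rw [Ideal.mem_span_singleton, Ideal.mem_span_singleton]
    rw [smul_eq_mul]
    constructor
    · rintro ⟨s, hs⟩
      refine ⟨s, ?_⟩
      have h0 : (r - x * s) * y = 0 := by linear_combination hs
      have := (mem_nonZeroDivisors_iff.mp hynzd).2 _ h0
      linear_combination this
    · rintro ⟨s, rfl⟩
      exact ⟨s, by ring⟩
  have hrange : LinearMap.range φ = N := by
    rw [hφ, LinearMap.range_comp, ← LinearMap.span_singleton_eq_range]
  have e₁ : (R ⧸ Ideal.span {x}) ≃ₗ[R] N :=
    (Submodule.quotEquivOfEq _ _ hker.symm).trans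
      (φ.quotKerEquivRange.trans (LinearEquiv.ofEq _ _ hrange))
  have e₂ : ((R ⧸ I) ⧸ N) ≃ₗ[R] R ⧸ Ideal.span {y} :=
    Submodule.quotientQuotientEquivQuotient I (Ideal.span {y}) hle
  rw [moduleLength_eq_add N, moduleLength_congr e₁.symm, moduleLength_congr e₂]
end

section
/- Let k be a field, r ≥ 2, and let t_1,…,t_{r−1} be nonnegative integers with t_1+⋯+t_{r−1} = m+1; set t_r = 0 and P = P(m;t_1,…,t_{r−1},0). For 0 ≤ q ≤ m, let h_q ∈ R be the coefficient of t^q in ∏_{i=1}^{r−1}(x_i^(0) + x_i^(1)t + ⋯ + x_i^(m)t^m), i.e., the level-m jet generators of the monomial x_1⋯x_{r−1}. Then J_m·R_P = (h_0,…,h_m)·R_P; consequently ℓ(R_P/J_m R_P) = ℓ(R_P/(h_0,…,h_m)R_P). -/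
lemma jetGen_succ_eq (k : Type*) [Field k] (m n s : ℕ) (hrn : s + 1 ≤ n) (hs : s ≤ n) (j : ℕ) :
    jetGen k m n (s + 1) hrn j =
      ∑ x ∈ Finset.HasAntidiagonal.antidiagonal j,
        jetGen k m n s hs x.1 *
          Polynomial.coeff (∑ l : Fin (m + 1),
            Polynomial.C (MvPolynomial.X (Fin.castLE hrn (Fin.last s), l) : JetRing k m n) *
              Polynomial.X ^ (l : ℕ)) x.2 := by
  unfold jetGen
  rw [Fin.prod_univ_castSucc, Polynomial.coeff_mul]
  rfl

lemma coeff_factor (k : Type*) [Field k] (m n : ℕ) (v : Fin n) (b : ℕ) :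
    Polynomial.coeff (∑ l : Fin (m + 1),
      Polynomial.C (MvPolynomial.X (v, l) : JetRing k m n) * Polynomial.X ^ (l : ℕ)) b
    = if h : b < m + 1 then MvPolynomial.X (v, ⟨b, h⟩) else 0 := by
  rw [Polynomial.finset_sum_coeff]
  simp only [Polynomial.coeff_C_mul, Polynomial.coeff_X_pow, mul_ite, mul_one, mul_zero]
  split
  · next h =>
    rw [Finset.sum_eq_single (⟨b, h⟩ : Fin (m+1))]
    · simp
    · intro l _ hl
      simp only [ite_eq_right_iff]
      intro hb; exact absurd (Fin.ext hb.symm) hl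
    · simp
  · next h =>
    apply Finset.sum_eq_zero
    intro l _
    simp only [ite_eq_right_iff]
    intro hb; omega


set_option maxHeartbeats 2000000 in
set_option synthInstance.maxHeartbeats 1000000 in
/-- Suppose `r ≥ 2` and `t_1, …, t_{r-1}` are nonnegative integers with
`t_1 + ⋯ + t_{r-1} = m + 1`; set `t_r = 0` and `P = P(m; t_1, …, t_{r-1}, 0)`.  Let
`h_0, …, h_m` be the level-`m` jet generators of the monomial `x_1⋯x_{r-1}`.  Then
`J_m R_P = (h_0, …, h_m) R_P`, and consequently
`ℓ(R_P/J_m R_P) = ℓ(R_P/(h_0, …, h_m)R_P)`. -/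
theorem jetIdeal_localization_eq_of_last_exponent_zero
    (k : Type*) [Field k]
    (m n r : ℕ) (hr : 2 ≤ r) (hrn : r ≤ n)
    (t : Fin r → ℕ) (htr : t ⟨r - 1, by omega⟩ = 0) (hsum : ∑ i, t i = m + 1)
    [hP : (compPrime k m n r hrn t).IsPrime] :
    Ideal.map (algebraMap (JetRing k m n) (Localization (compPrime k m n r hrn t).primeCompl))
        (jetIdeal k m n r hrn) =
      Ideal.map
        (algebraMap (JetRing k m n) (Localization (compPrime k m n r hrn t).primeCompl))
        (jetIdeal k m n (r - 1) (by omega)) ∧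
    moduleLength (Localization (compPrime k m n r hrn t).primeCompl)
        (Localization (compPrime k m n r hrn t).primeCompl ⧸
          Ideal.map
            (algebraMap (JetRing k m n) (Localization (compPrime k m n r hrn t).primeCompl))
            (jetIdeal k m n r hrn)) =
      moduleLength (Localization (compPrime k m n r hrn t).primeCompl)
        (Localization (compPrime k m n r hrn t).primeCompl ⧸
          Ideal.map
            (algebraMap (JetRing k m n) (Localization (compPrime k m n r hrn t).primeCompl))
            (jetIdeal k m n (r - 1) (by omega))) := by
  obtain ⟨s, rfl⟩ : ∃ s, r = s + 1 := ⟨r - 1, by omega⟩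
  have hs : s ≤ n := by omega
  set P := compPrime k m n (s + 1) hrn t with hPdef
  set A := Localization P.primeCompl
  set φ := algebraMap (JetRing k m n) A with hφ
  have key : ∀ j : ℕ, jetGen k m n (s + 1) hrn j =
      ∑ x ∈ Finset.HasAntidiagonal.antidiagonal j, jetGen k m n s hs x.1 *
        (if h : x.2 < m + 1 then
          MvPolynomial.X (Fin.castLE hrn (Fin.last s), (⟨x.2, h⟩ : Fin (m+1))) else 0) := by
    intro j
    rw [jetGen_succ_eq k m n s hrn hs]
    exact Finset.sum_congr rfl fun x _ => by rw [coeff_factor]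
  -- direction 1 in R
  have h1 : jetIdeal k m n (s + 1) hrn ≤ jetIdeal k m n s hs := by
    rw [jetIdeal, Ideal.span_le]
    rintro _ ⟨j, hj, rfl⟩
    rw [key]
    apply Ideal.sum_mem
    rintro ⟨a, b⟩ hab
    apply Ideal.mul_mem_right
    apply Ideal.subset_span
    refine ⟨a, ?_, rfl⟩
    simp only [Finset.HasAntidiagonal.mem_antidiagonal] at hab
    simp only [Set.mem_Iic] at hj ⊢
    omega
  -- the last variable is not in P
  have hX : MvPolynomial.X (Fin.castLE hrn (Fin.last s), (0 : Fin (m+1))) ∈ P.primeCompl := by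
    intro hmem
    rw [hPdef, compPrime] at hmem
    have hset : {p : JetRing k m n | ∃ (i : Fin (s+1)) (j : Fin (m + 1)), (j : ℕ) < t i ∧
        p = MvPolynomial.X (Fin.castLE hrn i, j)} =
        MvPolynomial.X '' {q : Fin n × Fin (m+1) | ∃ (i : Fin (s+1)) (j : Fin (m + 1)),
          (j : ℕ) < t i ∧ q = (Fin.castLE hrn i, j)} := by
      ext p
      constructor
      · rintro ⟨i, j, hij, rfl⟩; exact ⟨(Fin.castLE hrn i, j), ⟨i, j, hij, rfl⟩, rfl⟩
      · rintro ⟨q, ⟨i, j, hij, rfl⟩, rfl⟩; exact ⟨i, j, hij, rfl⟩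
    rw [hset] at hmem
    replace hmem := MvPolynomial.mem_ideal_span_X_image.mp hmem
    obtain ⟨v, hv, hne⟩ := hmem (Finsupp.single (Fin.castLE hrn (Fin.last s), 0) 1)
      (by simp [MvPolynomial.X, MvPolynomial.support_monomial])
    obtain ⟨i, j, hij, rfl⟩ := hv
    rw [Finsupp.single_apply] at hne
    have heq : (Fin.castLE hrn (Fin.last s), (0 : Fin (m+1))) = (Fin.castLE hrn i, j) := by
      by_contra hcon; simp [hcon] at hne
    have hi : i = Fin.last s :=
      (Fin.castLE_injective hrn (congrArg Prod.fst heq)).symm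
    have hj : j = 0 := (congrArg Prod.snd heq).symm
    rw [hi] at hij
    have : t (Fin.last s) = 0 := htr
    omega
  -- the image of the last variable is a unit
  have hu : IsUnit (φ (MvPolynomial.X (Fin.castLE hrn (Fin.last s), 0))) :=
    IsLocalization.map_units A (⟨_, hX⟩ : P.primeCompl)
  -- direction 2 in the localization
  have h2 : ∀ j, j ≤ m → φ (jetGen k m n s hs j) ∈
      Ideal.map φ (jetIdeal k m n (s + 1) hrn) := by
    intro j
    induction j using Nat.strong_induction_on with
    | _ j ih =>
      intro hj
      have hg : φ (jetGen k m n (s + 1) hrn j) ∈ Ideal.map φ (jetIdeal k m n (s + 1) hrn) :=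
        Ideal.mem_map_of_mem φ (Ideal.subset_span ⟨j, hj, rfl⟩)
      rw [key, Finset.add_sum_erase _ _
        (show ((j, 0) : ℕ × ℕ) ∈ Finset.HasAntidiagonal.antidiagonal j by simp) |>.symm] at hg
      rw [map_add, map_mul] at hg
      have hrest : φ (∑ x ∈ (Finset.HasAntidiagonal.antidiagonal j).erase (j, 0),
          jetGen k m n s hs x.1 * (if h : x.2 < m + 1 then
            MvPolynomial.X (Fin.castLE hrn (Fin.last s), (⟨x.2, h⟩ : Fin (m+1))) else 0)) ∈
          Ideal.map φ (jetIdeal k m n (s + 1) hrn) := by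
        rw [map_sum]
        apply Ideal.sum_mem
        rintro ⟨a, b⟩ hab
        simp only [Finset.mem_erase, Finset.HasAntidiagonal.mem_antidiagonal, ne_eq, Prod.mk.injEq] at hab
        have haj : a < j := by omega
        have ham : a ≤ m := by omega
        rw [map_mul]
        exact Ideal.mul_mem_right _ _ (ih a haj ham)
      have hmain : φ (jetGen k m n s hs j) * φ (MvPolynomial.X (Fin.castLE hrn (Fin.last s), 0))
          ∈ Ideal.map φ (jetIdeal k m n (s + 1) hrn) := by
        have := Ideal.sub_mem _ hg hrest
        simpa using this
      rw [mul_comm] at hmain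
      exact (Ideal.unit_mul_mem_iff_mem _ hu).mp hmain
  have hmap2 : Ideal.map φ (jetIdeal k m n s hs) ≤ Ideal.map φ (jetIdeal k m n (s + 1) hrn) := by
    rw [Ideal.map_le_iff_le_comap, jetIdeal, Ideal.span_le]
    rintro _ ⟨j, hj, rfl⟩
    exact h2 j hj
  have hEq : Ideal.map φ (jetIdeal k m n (s + 1) hrn) = Ideal.map φ (jetIdeal k m n s hs) :=
    le_antisymm (Ideal.map_mono h1) hmap2
  exact ⟨hEq, by rw [hEq]; rfl⟩
end
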